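/- Suppose C ⊇ M is full for non-splitting over M and p ∈ S(C) is finitely satisfied in M. Then for any set D ⊇ C there is a unique complete type q ∈ S(D) extending p that is finitely satisfied in M; moreover φ(x̄, d̄) ∈ q if and only if φ(x̄, c̄) ∈ p for some (equivalently every) c̄ from C with tp(d̄/M) = tp(c̄/M). -/

import Mathlib

open FirstOrder FirstOrder.Language Cardinal Set

universe u v w

namespace MonadicNIP

variable {L : FirstOrder.Language.{u, u}} {C : Type u} [L.Structure C]

/-- The complete type of the tuple `a` over the parameter set `B`:
all formulas with parameters from `B` and variables `α` satisfied by `a`. -/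
def tpSet {α : Type v} (B : Set C) (a : α → C) : Set (L.Formula (B ⊕ α)) :=
  {φ | φ.Realize (Sum.elim (Subtype.val : B → C) a)}

/-- A set of formulas over `B` (a "type") is finitely satisfied in `M` if each of
its formulas is realized by a tuple from `M`. -/
def FinSat (M : Set C) {α : Type v} {B : Set C} (p : Set (L.Formula (B ⊕ α))) : Prop :=
  ∀ φ ∈ p, ∃ m : α → C, (∀ i, m i ∈ M) ∧
    Formula.Realize φ (Sum.elim (Subtype.val : B → C) m)

/-- `p` is a complete type over `B` (in the monster `C`): finitely satisfiable
in `C` and deciding every formula. -/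
def IsCompleteType {α : Type v} (B : Set C) (p : Set (L.Formula (B ⊕ α))) : Prop :=
  (∀ s : Finset (L.Formula (B ⊕ α)), ↑s ⊆ p →
      ∃ a : α → C, ∀ φ ∈ s, Formula.Realize φ (Sum.elim (Subtype.val : B → C) a)) ∧
    ∀ φ : L.Formula (B ⊕ α), φ ∈ p ∨ φ.not ∈ p

/-- `tp(A/B)` is finitely satisfied in `M` (formulated without an enumeration of `A`). -/
def SetFinSat (L : FirstOrder.Language.{u, u}) {C : Type u} [L.Structure C] (M B A : Set C) : Prop :=
  ∀ (n : ℕ) (φ : L.Formula (B ⊕ Fin n)) (a : Fin n → C), (∀ i, a i ∈ A) →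
    φ.Realize (Sum.elim (Subtype.val : B → C) a) →
    ∃ m : Fin n → C, (∀ i, m i ∈ M) ∧ φ.Realize (Sum.elim (Subtype.val : B → C) m)

/-- `⟨A i : i ∈ I⟩` is an `M`-f.s. sequence over `B`. -/
def IsFSSeq (L : FirstOrder.Language.{u, u}) {C : Type u} [L.Structure C] (M B : Set C) {I : Type v} [LinearOrder I] (A : I → Set C) : Prop :=
  ∀ i : I, SetFinSat L M (B ∪ ⋃ j < i, A j) (A i)

/-- The average type of an ultrafilter `U` on `M^n` over the parameter set `B`. -/
def Av {n : ℕ} {M : Set C} (U : Ultrafilter (Fin n → M)) (B : Set C) :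
    Set (L.Formula (B ⊕ Fin n)) :=
  {φ | {m : Fin n → M |
      Formula.Realize φ (Sum.elim (Subtype.val : B → C) (fun i => (m i : C)))} ∈ U}

/-- `C0` is full (for non-splitting over `M`): every complete type over `M`
in finitely many variables (realized in the monster) is realized in `C0`. -/
def IsFull (L : FirstOrder.Language.{u, u}) {C : Type u} [L.Structure C] (M C0 : Set C) : Prop :=
  ∀ (n : ℕ) (a : Fin n → C), ∃ c : Fin n → C, (∀ i, c i ∈ C0) ∧
    tpSet (L := L) M a = tpSet (L := L) M c

/-- The sequence of tuples `a` is indiscernible over `B`. -/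
def IndiscernibleOver (L : FirstOrder.Language.{u, u}) {C : Type u} [L.Structure C] {I : Type v} [LinearOrder I] {α : Type w} (B : Set C)
    (a : I → α → C) : Prop :=
  ∀ (n : ℕ) (i j : Fin n → I), StrictMono i → StrictMono j →
    tpSet (L := L) B (fun p : Fin n × α => a (i p.1) p.2) =
      tpSet (L := L) B (fun p : Fin n × α => a (j p.1) p.2)

/-- The type `p` over `B` does not split over `M0`: parameter tuples from `B`
with the same type over `M0` are interchangeable in `p`. -/
def NotSplitOver (M0 : Set C) {B : Set C} {α : Type v}
    (p : Set (L.Formula (B ⊕ α))) : Prop :=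
  ∀ (k : ℕ) (b b' : Fin k → B) (φ : L.Formula (Fin k ⊕ α)),
    tpSet (L := L) M0 (fun i => (b i : C)) = tpSet (L := L) M0 (fun i => (b' i : C)) →
    (φ.relabel (Sum.elim (fun i => Sum.inl (b i)) Sum.inr) ∈ p ↔
      φ.relabel (Sum.elim (fun i => Sum.inl (b' i)) Sum.inr) ∈ p)


variable {α : Type v}

/-- substituting a tuple of parameters from `B` into a formula with `Fin k` parameter slots -/
def inst {B : Set C} {k : ℕ} (χ : L.Formula (Fin k ⊕ α)) (b : Fin k → B) :
    L.Formula (B ⊕ α) :=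
  χ.relabel (Sum.elim (fun i => Sum.inl (b i)) Sum.inr)

lemma realize_inst {B : Set C} {k : ℕ} (χ : L.Formula (Fin k ⊕ α)) (b : Fin k → B)
    (v : α → C) :
    (inst χ b).Realize (Sum.elim (Subtype.val : B → C) v) ↔
      χ.Realize (Sum.elim (fun i => (b i : C)) v) := by
  rw [inst, Formula.realize_relabel]
  exact Iff.of_eq (congrArg _ (by funext x; cases x <;> rfl))

section CompleteType

variable {B : Set C} {r : Set (L.Formula (B ⊕ α))}

lemma consistent (hr : IsCompleteType B r) {φ : L.Formula (B ⊕ α)}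
    (h1 : φ ∈ r) (h2 : φ.not ∈ r) : False := by
  classical
  obtain ⟨a, ha⟩ := hr.1 {φ, φ.not} (by
    intro x hx
    rcases Finset.mem_insert.mp hx with h | h
    · exact h ▸ h1
    · exact (Finset.mem_singleton.mp h) ▸ h2)
  have hφ := ha φ (Finset.mem_insert_self _ _)
  have hnφ := ha φ.not (Finset.mem_insert_of_mem (Finset.mem_singleton_self _))
  rw [Formula.realize_not] at hnφ
  exact hnφ hφ

lemma not_mem_iff (hr : IsCompleteType B r) {φ : L.Formula (B ⊕ α)} :
    φ.not ∈ r ↔ φ ∉ r :=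
  ⟨fun h h' => consistent hr h' h, fun h => (hr.2 φ).resolve_left h⟩

lemma mem_congr (hr : IsCompleteType B r) {φ ψ : L.Formula (B ⊕ α)}
    (h : ∀ v : α → C, φ.Realize (Sum.elim (Subtype.val : B → C) v) ↔
      ψ.Realize (Sum.elim (Subtype.val : B → C) v))
    (hφ : φ ∈ r) : ψ ∈ r := by
  classical
  by_contra hψ
  have hn : ψ.not ∈ r := (not_mem_iff hr).2 hψ
  obtain ⟨a, ha⟩ := hr.1 {φ, ψ.not} (by
    intro x hx
    rcases Finset.mem_insert.mp hx with h' | h'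
    · exact h' ▸ hφ
    · exact (Finset.mem_singleton.mp h') ▸ hn)
  have h1 := ha φ (Finset.mem_insert_self _ _)
  have h2 := ha ψ.not (Finset.mem_insert_of_mem (Finset.mem_singleton_self _))
  rw [Formula.realize_not] at h2
  exact h2 ((h a).1 h1)

lemma inf_mem (hr : IsCompleteType B r) {φ ψ : L.Formula (B ⊕ α)}
    (hφ : φ ∈ r) (hψ : ψ ∈ r) : φ ⊓ ψ ∈ r := by
  classical
  by_contra h
  have hn : (φ ⊓ ψ).not ∈ r := (not_mem_iff hr).2 h
  obtain ⟨a, ha⟩ := hr.1 {φ, ψ, (φ ⊓ ψ).not} (by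
    intro x hx
    simp only [Finset.coe_insert, Set.mem_insert_iff, Finset.coe_singleton,
      Set.mem_singleton_iff] at hx
    rcases hx with h' | h' | h'
    · exact h' ▸ hφ
    · exact h' ▸ hψ
    · exact h' ▸ hn)
  have h1 := ha φ (by simp)
  have h2 := ha ψ (by simp)
  have h3 := ha (φ ⊓ ψ).not (by simp)
  rw [Formula.realize_not, Formula.realize_inf] at h3
  exact h3 ⟨h1, h2⟩

lemma top_mem (hr : IsCompleteType B r) : (⊤ : L.Formula (B ⊕ α)) ∈ r := by
  classical
  rcases hr.2 ⊤ with h | h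
  · exact h
  · exfalso
    obtain ⟨a, ha⟩ := hr.1 {(⊤ : L.Formula (B ⊕ α)).not} (by
      intro x hx
      rw [Finset.coe_singleton, Set.mem_singleton_iff] at hx
      exact hx ▸ h)
    have := ha _ (Finset.mem_singleton_self _)
    rw [Formula.realize_not, Formula.realize_top] at this
    exact this trivial

end CompleteType

lemma tpSet_comp {γ : Type w} {M0 : Set C} {a b : γ → C}
    (h : tpSet (L := L) M0 a = tpSet (L := L) M0 b) {k : ℕ} (f : Fin k → γ) :
    tpSet (L := L) M0 (a ∘ f) = tpSet (L := L) M0 (b ∘ f) := by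
  ext φ
  have := Set.ext_iff.mp h (φ.relabel (Sum.map id f))
  simp only [tpSet, Set.mem_setOf_eq, Formula.realize_relabel] at this ⊢
  have e1 : (Sum.elim (Subtype.val : M0 → C) a) ∘ (Sum.map id f) =
      Sum.elim (Subtype.val : M0 → C) (a ∘ f) := by funext x; cases x <;> rfl
  have e2 : (Sum.elim (Subtype.val : M0 → C) b) ∘ (Sum.map id f) =
      Sum.elim (Subtype.val : M0 → C) (b ∘ f) := by funext x; cases x <;> rfl
  rw [e1, e2] at this
  exact this

lemma realize_swap {M0 : Set C} {k : ℕ} {a b : Fin k → C}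
    (h : tpSet (L := L) M0 a = tpSet (L := L) M0 b)
    (χ : L.Formula (Fin k ⊕ α)) (m : α → C) (hm : ∀ i, m i ∈ M0) :
    χ.Realize (Sum.elim a m) ↔ χ.Realize (Sum.elim b m) := by
  have key : ∀ c : Fin k → C,
      (χ.relabel (Sum.elim Sum.inr (fun x => Sum.inl (⟨m x, hm x⟩ : M0)) :
        Fin k ⊕ α → M0 ⊕ Fin k)).Realize (Sum.elim (Subtype.val : M0 → C) c) ↔
      χ.Realize (Sum.elim c m) := by
    intro c
    rw [Formula.realize_relabel]
    exact Iff.of_eq (congrArg _ (by funext x; cases x <;> rfl))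
  have := Set.ext_iff.mp h
    (χ.relabel (Sum.elim Sum.inr (fun x => Sum.inl (⟨m x, hm x⟩ : M0))))
  simp only [tpSet, Set.mem_setOf_eq] at this
  rw [key a, key b] at this
  exact this

lemma nonsplit_mp {B M0 : Set C} {r : Set (L.Formula (B ⊕ α))}
    (hr : IsCompleteType B r) (hfsr : FinSat M0 r) {k : ℕ} {b b' : Fin k → B}
    (h : tpSet (L := L) M0 (fun i => (b i : C)) = tpSet (L := L) M0 (fun i => (b' i : C)))
    (χ : L.Formula (Fin k ⊕ α)) (hb : inst χ b ∈ r) : inst χ b' ∈ r := by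
  by_contra hb'
  have hnot : (inst χ b').not ∈ r := (not_mem_iff hr).2 hb'
  obtain ⟨m, hm, hreal⟩ := hfsr _ (inf_mem hr hb hnot)
  rw [Formula.realize_inf, Formula.realize_not, realize_inst, realize_inst] at hreal
  exact hreal.2 ((realize_swap h χ m hm).1 hreal.1)

lemma fs_inst {B M0 : Set C} {r : Set (L.Formula (B ⊕ α))} (hfsr : FinSat M0 r)
    {k : ℕ} {b : Fin k → B} {a : Fin k → C}
    (h : tpSet (L := L) M0 a = tpSet (L := L) M0 (fun i => (b i : C)))
    (χ : L.Formula (Fin k ⊕ α)) (hb : inst χ b ∈ r) :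
    ∃ m : α → C, (∀ i, m i ∈ M0) ∧ χ.Realize (Sum.elim a m) := by
  obtain ⟨m, hm, hreal⟩ := hfsr _ hb
  rw [realize_inst] at hreal
  exact ⟨m, hm, (realize_swap h χ m hm).2 hreal⟩


lemma decomp {B : Set C} (ψ : L.Formula (B ⊕ α)) :
    ∃ (k : ℕ) (χ : L.Formula (Fin k ⊕ α)) (d : Fin k → B),
      ∀ v : α → C, ψ.Realize (Sum.elim (Subtype.val : B → C) v) ↔
        χ.Realize (Sum.elim (fun i => (d i : C)) v) := by
  classical
  set S : Finset (B ⊕ α) := ψ.freeVarFinset with hS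
  set T : Finset B := S.biUnion
    (fun x => Sum.elim (fun dd => {dd}) (fun _ => (∅ : Finset B)) x) with hT
  have hmemT : ∀ dd : B, Sum.inl dd ∈ S → dd ∈ T := fun dd h =>
    Finset.mem_biUnion.2 ⟨Sum.inl dd, h, Finset.mem_singleton_self dd⟩
  set e := T.equivFin with he
  set d : Fin T.card → B := fun i => (e.symm i : B) with hd
  set g : (↑S : Set (B ⊕ α)) → Fin T.card ⊕ α := fun x =>
    Sum.rec (motive := fun y => y ∈ (↑S : Set (B ⊕ α)) → Fin T.card ⊕ α)
      (fun dd hdd => Sum.inl (e ⟨dd, hmemT dd hdd⟩))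
      (fun a _ => Sum.inr a) x.1 x.2 with hg
  refine ⟨T.card, Formula.relabel g (ψ.restrictFreeVar (Set.inclusion (subset_rfl :
      (↑ψ.freeVarFinset : Set (B ⊕ α)) ⊆ ↑S))), d, fun v => ?_⟩
  rw [Formula.realize_relabel]
  have hcomp : (Sum.elim (fun i => ((d i : B) : C)) v) ∘ g =
      (Sum.elim (Subtype.val : B → C) v) ∘ (Subtype.val : (↑S : Set (B ⊕ α)) → B ⊕ α) := by
    funext x
    obtain ⟨y, hy⟩ := x
    cases y with
    | inl dd => simp [hg, hd, he]
    | inr a => simp [hg]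
  rw [hcomp]
  exact (BoundedFormula.realize_restrictFreeVar' (M := C) (φ := ψ) (s := ↑S)
    subset_rfl (v := Sum.elim (Subtype.val : B → C) v) (xs := default)).symm

lemma main_transfer {M0 C0 D : Set C} (hCD : C0 ⊆ D)
    {p : Set (L.Formula (C0 ⊕ α))} (hp : IsCompleteType C0 p)
    {q : Set (L.Formula (D ⊕ α))} (hq : IsCompleteType D q) (hfsq : FinSat M0 q)
    (hext : ∀ φ ∈ p, φ.relabel (Sum.map (Set.inclusion hCD) id) ∈ q)
    {k : ℕ} (χ : L.Formula (Fin k ⊕ α)) (d : Fin k → D) (c : Fin k → C0)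
    (h : tpSet (L := L) M0 (fun i => (d i : C)) = tpSet (L := L) M0 (fun i => (c i : C))) :
    inst χ d ∈ q ↔ inst χ c ∈ p := by
  set c' : Fin k → D := fun i => Set.inclusion hCD (c i) with hc'
  have h' : tpSet (L := L) M0 (fun i => (d i : C)) =
      tpSet (L := L) M0 (fun i => (c' i : C)) := h
  have step1 : inst χ d ∈ q ↔ inst χ c' ∈ q :=
    ⟨nonsplit_mp hq hfsq h' χ, nonsplit_mp hq hfsq h'.symm χ⟩
  have hequiv : ∀ v : α → C,
      ((inst χ c).relabel (Sum.map (Set.inclusion hCD) id)).Realize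
        (Sum.elim (Subtype.val : D → C) v) ↔
      (inst χ c').Realize (Sum.elim (Subtype.val : D → C) v) := by
    intro v
    rw [Formula.realize_relabel, realize_inst]
    have : (Sum.elim (Subtype.val : D → C) v) ∘ (Sum.map (Set.inclusion hCD) id) =
        Sum.elim (Subtype.val : C0 → C) v := by funext x; cases x <;> rfl
    rw [this, realize_inst]
  have hequivn : ∀ v : α → C,
      (((inst χ c).not).relabel (Sum.map (Set.inclusion hCD) id)).Realize
        (Sum.elim (Subtype.val : D → C) v) ↔
      ((inst χ c').not).Realize (Sum.elim (Subtype.val : D → C) v) := by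
    intro v
    rw [Formula.realize_relabel]
    have : (Sum.elim (Subtype.val : D → C) v) ∘ (Sum.map (Set.inclusion hCD) id) =
        Sum.elim (Subtype.val : C0 → C) v := by funext x; cases x <;> rfl
    rw [this, Formula.realize_not, Formula.realize_not, realize_inst, realize_inst]
  have step2 : inst χ c' ∈ q ↔ inst χ c ∈ p := by
    constructor
    · intro hmem
      by_contra hc
      have : (inst χ c).not ∈ p := (not_mem_iff hp).2 hc
      have := mem_congr hq hequivn (hext _ this)
      exact consistent hq hmem this
    · intro hc
      exact mem_congr hq hequiv (hext _ hc)
  exact step1.trans step2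


/-- the canonical extension of `p` to `D` -/
def qExt (M0 C0 D : Set C) (p : Set (L.Formula (C0 ⊕ α))) : Set (L.Formula (D ⊕ α)) :=
  {ψ | ∃ (k : ℕ) (χ : L.Formula (Fin k ⊕ α)) (d : Fin k → D) (c : Fin k → C0),
    (∀ v : α → C, ψ.Realize (Sum.elim (Subtype.val : D → C) v) ↔
      χ.Realize (Sum.elim (fun i => (d i : C)) v)) ∧
    tpSet (L := L) M0 (fun i => (d i : C)) = tpSet (L := L) M0 (fun i => (c i : C)) ∧
    inst χ c ∈ p}

variable {M0 C0 D : Set C} {p : Set (L.Formula (C0 ⊕ α))}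

lemma qExt_finSat (hfs : FinSat M0 p) : FinSat M0 (qExt (L := L) (α := α) M0 C0 D p) := by
  rintro ψ ⟨k, χ, d, c, hsem, htp, hmem⟩
  obtain ⟨m, hm, hr⟩ := fs_inst hfs htp χ hmem
  exact ⟨m, hm, (hsem m).2 hr⟩

lemma qExt_top (hp : IsCompleteType C0 p) :
    (⊤ : L.Formula (D ⊕ α)) ∈ qExt (L := L) M0 C0 D p := by
  refine ⟨0, ⊤, Fin.elim0, Fin.elim0, ?_, ?_, ?_⟩
  · intro v; simp [Formula.realize_top]
  · exact congrArg (tpSet M0) (funext fun i => i.elim0)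
  · refine mem_congr hp (φ := ⊤) (fun v => ?_) (top_mem hp)
    rw [realize_inst]; simp [Formula.realize_top]

lemma qExt_inf (hp : IsCompleteType C0 p) (hfs : FinSat M0 p)
    (hfull : ∀ (n : ℕ) (a : Fin n → C), ∃ c : Fin n → C, (∀ i, c i ∈ C0) ∧
      tpSet (L := L) M0 a = tpSet (L := L) M0 c)
    {ψ₁ ψ₂ : L.Formula (D ⊕ α)} (h₁ : ψ₁ ∈ qExt (L := L) M0 C0 D p)
    (h₂ : ψ₂ ∈ qExt (L := L) M0 C0 D p) : ψ₁ ⊓ ψ₂ ∈ qExt (L := L) M0 C0 D p := by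
  obtain ⟨k₁, χ₁, d₁, c₁, hsem₁, htp₁, hmem₁⟩ := h₁
  obtain ⟨k₂, χ₂, d₂, c₂, hsem₂, htp₂, hmem₂⟩ := h₂
  set d : Fin (k₁ + k₂) → D := Fin.append d₁ d₂ with hd
  obtain ⟨cc, hcc, htpcc⟩ := hfull (k₁ + k₂) (fun i => (d i : C))
  set c : Fin (k₁ + k₂) → C0 := fun i => ⟨cc i, hcc i⟩ with hc
  have htp : tpSet (L := L) M0 (fun i => (d i : C)) =
      tpSet (L := L) M0 (fun i => (c i : C)) := htpcc
  have hb1 : (fun i => (d i : C)) ∘ (Fin.castAdd k₂) = fun i => (d₁ i : C) := by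
    funext i; simp [hd, Fin.append_left]
  have hb2 : (fun i => (d i : C)) ∘ (Fin.natAdd k₁) = fun i => (d₂ i : C) := by
    funext i; simp [hd, Fin.append_right]
  -- type equality for the two blocks of c
  have hcb1 : tpSet (L := L) M0 (fun i => (c₁ i : C)) =
      tpSet (L := L) M0 (fun i => ((c (Fin.castAdd k₂ i)) : C)) := by
    have := tpSet_comp (L := L) htp (Fin.castAdd k₂)
    rw [hb1] at this
    exact htp₁.symm.trans this
  have hcb2 : tpSet (L := L) M0 (fun i => (c₂ i : C)) =
      tpSet (L := L) M0 (fun i => ((c (Fin.natAdd k₁ i)) : C)) := by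
    have := tpSet_comp (L := L) htp (Fin.natAdd k₁)
    rw [hb2] at this
    exact htp₂.symm.trans this
  have hm1 : inst χ₁ (fun i => c (Fin.castAdd k₂ i)) ∈ p := nonsplit_mp hp hfs hcb1 χ₁ hmem₁
  have hm2 : inst χ₂ (fun i => c (Fin.natAdd k₁ i)) ∈ p := nonsplit_mp hp hfs hcb2 χ₂ hmem₂
  set χ : L.Formula (Fin (k₁ + k₂) ⊕ α) :=
    (Formula.relabel (Sum.map (Fin.castAdd k₂) id) χ₁) ⊓
      (Formula.relabel (Sum.map (Fin.natAdd k₁) id) χ₂) with hχ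
  have hχreal : ∀ (b : Fin (k₁ + k₂) → C) (v : α → C),
      χ.Realize (Sum.elim b v) ↔
        χ₁.Realize (Sum.elim (fun i => b (Fin.castAdd k₂ i)) v) ∧
        χ₂.Realize (Sum.elim (fun i => b (Fin.natAdd k₁ i)) v) := by
    intro b v
    rw [hχ, Formula.realize_inf, Formula.realize_relabel, Formula.realize_relabel]
    have e1 : (Sum.elim b v) ∘ (Sum.map (Fin.castAdd k₂) id) =
        Sum.elim (fun i => b (Fin.castAdd k₂ i)) v := by funext x; cases x <;> rfl
    have e2 : (Sum.elim b v) ∘ (Sum.map (Fin.natAdd k₁) id) =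
        Sum.elim (fun i => b (Fin.natAdd k₁ i)) v := by funext x; cases x <;> rfl
    rw [e1, e2]
  refine ⟨k₁ + k₂, χ, d, c, ?_, htp, ?_⟩
  · intro v
    rw [Formula.realize_inf, hχreal, hsem₁ v, hsem₂ v]
    constructor
    · rintro ⟨a1, a2⟩
      constructor
      · have : (fun i => ((d (Fin.castAdd k₂ i)) : C)) = fun i => (d₁ i : C) := hb1
        rw [this]; exact a1
      · have : (fun i => ((d (Fin.natAdd k₁ i)) : C)) = fun i => (d₂ i : C) := hb2
        rw [this]; exact a2
    · rintro ⟨a1, a2⟩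
      constructor
      · have : (fun i => ((d (Fin.castAdd k₂ i)) : C)) = fun i => (d₁ i : C) := hb1
        rw [this] at a1; exact a1
      · have : (fun i => ((d (Fin.natAdd k₁ i)) : C)) = fun i => (d₂ i : C) := hb2
        rw [this] at a2; exact a2
  · refine mem_congr hp (φ := inst χ₁ (fun i => c (Fin.castAdd k₂ i)) ⊓
      inst χ₂ (fun i => c (Fin.natAdd k₁ i))) (fun v => ?_) (inf_mem hp hm1 hm2)
    rw [Formula.realize_inf, realize_inst, realize_inst, realize_inst, hχreal]

lemma qExt_decides (hp : IsCompleteType C0 p) (hfs : FinSat M0 p)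
    (hfull : ∀ (n : ℕ) (a : Fin n → C), ∃ c : Fin n → C, (∀ i, c i ∈ C0) ∧
      tpSet (L := L) M0 a = tpSet (L := L) M0 c)
    (ψ : L.Formula (D ⊕ α)) :
    ψ ∈ qExt (L := L) M0 C0 D p ∨ ψ.not ∈ qExt (L := L) M0 C0 D p := by
  obtain ⟨k, χ, d, hsem⟩ := decomp ψ
  obtain ⟨cc, hcc, htpcc⟩ := hfull k (fun i => (d i : C))
  set c : Fin k → C0 := fun i => ⟨cc i, hcc i⟩ with hc
  have htp : tpSet (L := L) M0 (fun i => (d i : C)) =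
      tpSet (L := L) M0 (fun i => (c i : C)) := htpcc
  rcases hp.2 (inst χ c) with h | h
  · exact Or.inl ⟨k, χ, d, c, hsem, htp, h⟩
  · refine Or.inr ⟨k, χ.not, d, c, ?_, htp, ?_⟩
    · intro v
      rw [Formula.realize_not, Formula.realize_not, hsem v]
    · refine mem_congr hp (φ := (inst χ c).not) (fun v => ?_) h
      rw [Formula.realize_not, realize_inst, realize_inst, Formula.realize_not]

lemma qExt_complete (hp : IsCompleteType C0 p) (hfs : FinSat M0 p)
    (hfull : ∀ (n : ℕ) (a : Fin n → C), ∃ c : Fin n → C, (∀ i, c i ∈ C0) ∧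
      tpSet (L := L) M0 a = tpSet (L := L) M0 c) :
    IsCompleteType D (qExt (L := L) (α := α) M0 C0 D p) := by
  classical
  constructor
  · intro s hs
    have key : ∀ t : Finset (L.Formula (D ⊕ α)), ↑t ⊆ qExt (L := L) M0 C0 D p →
        ∃ θ ∈ qExt (L := L) (α := α) M0 C0 D p, ∀ v : α → C,
          θ.Realize (Sum.elim (Subtype.val : D → C) v) →
          ∀ φ ∈ t, φ.Realize (Sum.elim (Subtype.val : D → C) v) := by
      intro t
      induction t using Finset.induction_on with
      | empty =>
        intro _
        exact ⟨⊤, qExt_top hp, fun v _ φ hφ => absurd hφ (by simp)⟩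
      | insert _ _ ha ih =>
        rename_i a t
        intro hsub
        obtain ⟨θ, hθ, himp⟩ := ih (fun x hx => hsub (Finset.mem_insert_of_mem hx))
        refine ⟨a ⊓ θ, qExt_inf hp hfs hfull (hsub (Finset.mem_insert_self _ _)) hθ,
          fun v hv φ hφ => ?_⟩
        rw [Formula.realize_inf] at hv
        rcases Finset.mem_insert.mp hφ with h | h
        · exact h ▸ hv.1
        · exact himp v hv.2 φ h
    obtain ⟨θ, hθ, himp⟩ := key s hs
    obtain ⟨m, _, hr⟩ := qExt_finSat hfs θ hθ
    exact ⟨m, fun φ hφ => himp m hr φ hφ⟩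
  · exact qExt_decides hp hfs hfull

lemma qExt_extends (hCD : C0 ⊆ D) (hp : IsCompleteType C0 p) :
    ∀ φ ∈ p, φ.relabel (Sum.map (Set.inclusion hCD) id) ∈ qExt (L := L) M0 C0 D p := by
  intro φ hφ
  obtain ⟨k, χ, c, hsem⟩ := decomp φ
  refine ⟨k, χ, fun i => Set.inclusion hCD (c i), c, ?_, rfl, ?_⟩
  · intro v
    rw [Formula.realize_relabel]
    have : (Sum.elim (Subtype.val : D → C) v) ∘ (Sum.map (Set.inclusion hCD) id) =
        Sum.elim (Subtype.val : C0 → C) v := by funext x; cases x <;> rfl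
    rw [this]
    exact hsem v
  · refine mem_congr hp (φ := φ) (fun v => ?_) hφ
    rw [realize_inst]
    exact hsem v


theorem statement6' (M : L.ElementarySubstructure C) (C0 : Set C)
    (hMC : (M : Set C) ⊆ C0)
    (hfull : ∀ (n : ℕ) (a : Fin n → C), ∃ c : Fin n → C, (∀ i, c i ∈ C0) ∧
      tpSet (L := L) (M : Set C) a = tpSet (L := L) (M : Set C) c)
    {α : Type v} (p : Set (L.Formula (C0 ⊕ α)))
    (hp : IsCompleteType C0 p) (hfs : FinSat (M : Set C) p)
    (D : Set C) (hCD : C0 ⊆ D) :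
    (∃! q : Set (L.Formula (D ⊕ α)),
        IsCompleteType D q ∧ FinSat (M : Set C) q ∧
        ∀ φ ∈ p, φ.relabel (Sum.map (Set.inclusion hCD) id) ∈ q) ∧
    ∀ q : Set (L.Formula (D ⊕ α)),
      IsCompleteType D q → FinSat (M : Set C) q →
      (∀ φ ∈ p, φ.relabel (Sum.map (Set.inclusion hCD) id) ∈ q) →
      ∀ (k : ℕ) (φ : L.Formula (Fin k ⊕ α)) (d : Fin k → D),
        (φ.relabel (Sum.elim (fun i => Sum.inl (d i)) Sum.inr) ∈ q ↔
          ∃ c : Fin k → C0,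
            tpSet (L := L) (M : Set C) (fun i => ((d i : C))) =
              tpSet (L := L) (M : Set C) (fun i => ((c i : C))) ∧
            φ.relabel (Sum.elim (fun i => Sum.inl (c i)) Sum.inr) ∈ p) ∧
        (∀ c : Fin k → C0,
            tpSet (L := L) (M : Set C) (fun i => ((d i : C))) =
              tpSet (L := L) (M : Set C) (fun i => ((c i : C))) →
            (φ.relabel (Sum.elim (fun i => Sum.inl (d i)) Sum.inr) ∈ q ↔
              φ.relabel (Sum.elim (fun i => Sum.inl (c i)) Sum.inr) ∈ p)) := by
  set q0 := qExt (L := L) (α := α) (M : Set C) C0 D p with hq0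
  have hqc : IsCompleteType D q0 := qExt_complete hp hfs hfull
  have hqfs : FinSat (M : Set C) q0 := qExt_finSat hfs
  have hqe : ∀ φ ∈ p, φ.relabel (Sum.map (Set.inclusion hCD) id) ∈ q0 :=
    qExt_extends hCD hp
  constructor
  · refine ⟨q0, ⟨hqc, hqfs, hqe⟩, ?_⟩
    rintro q' ⟨hq'c, hq'fs, hq'e⟩
    ext ψ
    obtain ⟨k, χ, d, hsem⟩ := decomp ψ
    obtain ⟨cc, hcc, htpcc⟩ := hfull k (fun i => (d i : C))
    set c : Fin k → C0 := fun i => ⟨cc i, hcc i⟩ with hc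
    have htp : tpSet (L := L) (M : Set C) (fun i => (d i : C)) =
        tpSet (L := L) (M : Set C) (fun i => (c i : C)) := htpcc
    have hsem' : ∀ v : α → C, ψ.Realize (Sum.elim (Subtype.val : D → C) v) ↔
        (inst χ d).Realize (Sum.elim (Subtype.val : D → C) v) := fun v =>
      (hsem v).trans (realize_inst χ d v).symm
    have e1 : ψ ∈ q' ↔ inst χ d ∈ q' :=
      ⟨mem_congr hq'c hsem', mem_congr hq'c (fun v => (hsem' v).symm)⟩
    have e2 : ψ ∈ q0 ↔ inst χ d ∈ q0 :=
      ⟨mem_congr hqc hsem', mem_congr hqc (fun v => (hsem' v).symm)⟩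
    rw [e1, e2, main_transfer hCD hp hq'c hq'fs hq'e χ d c htp,
      main_transfer hCD hp hqc hqfs hqe χ d c htp]
  · intro q' hq'c hq'fs hq'e k φ d
    constructor
    · constructor
      · intro h
        obtain ⟨cc, hcc, htpcc⟩ := hfull k (fun i => (d i : C))
        set c : Fin k → C0 := fun i => ⟨cc i, hcc i⟩ with hc
        have htp : tpSet (L := L) (M : Set C) (fun i => (d i : C)) =
            tpSet (L := L) (M : Set C) (fun i => (c i : C)) := htpcc
        exact ⟨c, htp, (main_transfer hCD hp hq'c hq'fs hq'e φ d c htp).1 h⟩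
      · rintro ⟨c, htp, hmem⟩
        exact (main_transfer hCD hp hq'c hq'fs hq'e φ d c htp).2 hmem
    · intro c htp
      exact main_transfer hCD hp hq'c hq'fs hq'e φ d c htp

/-- If `C0 ⊇ M` is full and `p ∈ S(C0)` is finitely satisfied in `M`, then
for any `D ⊇ C0` there is a unique complete `q ∈ S(D)` extending `p` finitely satisfied
in `M`; moreover `φ(x̄, d̄) ∈ q` iff `φ(x̄, c̄) ∈ p` for some (equivalently every) `c̄`
from `C0` with `tp(d̄/M) = tp(c̄/M)`. -/
theorem statement6 (M : L.ElementarySubstructure C) (C0 : Set C)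
    (hMC : (M : Set C) ⊆ C0) (hfull : IsFull L (M : Set C) C0)
    {α : Type v} (p : Set (L.Formula (C0 ⊕ α)))
    (hp : IsCompleteType C0 p) (hfs : FinSat (M : Set C) p)
    (D : Set C) (hCD : C0 ⊆ D) :
    (∃! q : Set (L.Formula (D ⊕ α)),
        IsCompleteType D q ∧ FinSat (M : Set C) q ∧
        ∀ φ ∈ p, φ.relabel (Sum.map (Set.inclusion hCD) id) ∈ q) ∧
    ∀ q : Set (L.Formula (D ⊕ α)),
      IsCompleteType D q → FinSat (M : Set C) q →
      (∀ φ ∈ p, φ.relabel (Sum.map (Set.inclusion hCD) id) ∈ q) →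
      ∀ (k : ℕ) (φ : L.Formula (Fin k ⊕ α)) (d : Fin k → D),
        (φ.relabel (Sum.elim (fun i => Sum.inl (d i)) Sum.inr) ∈ q ↔
          ∃ c : Fin k → C0,
            tpSet (L := L) (M : Set C) (fun i => ((d i : C))) =
              tpSet (L := L) (M : Set C) (fun i => ((c i : C))) ∧
            φ.relabel (Sum.elim (fun i => Sum.inl (c i)) Sum.inr) ∈ p) ∧
        (∀ c : Fin k → C0,
            tpSet (L := L) (M : Set C) (fun i => ((d i : C))) =
              tpSet (L := L) (M : Set C) (fun i => ((c i : C))) →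
            (φ.relabel (Sum.elim (fun i => Sum.inl (d i)) Sum.inr) ∈ q ↔
              φ.relabel (Sum.elim (fun i => Sum.inl (c i)) Sum.inr) ∈ p)) := by
  exact statement6' M C0 hMC hfull p hp hfs D hCD

end MonadicNIP
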